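/- For every real number κ ≥ 1, the polynomial inequality (2κ + 6/5)² - (κ-1)²·g₁(κ) ≥ 0 holds, where g₁(κ) := 4 + 20/κ² + 56/κ³ + 40/κ⁴ + 8/κ⁵ + 20/κ⁶ + 12/κ⁷ + 1/κ⁸ + 2/κ⁹ + 1/κ¹⁰. -/

import Mathlib

noncomputable def g1 (κ : ℝ) : ℝ :=
  4 + 20/κ^2 + 56/κ^3 + 40/κ^4 + 8/κ^5 + 20/κ^6 + 12/κ^7 + 1/κ^8 + 2/κ^9 + 1/κ^10

theorem stmt_2 (κ : ℝ) (hκ : 1 ≤ κ) :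
    0 ≤ (2*κ + 6/5)^2 - (κ - 1)^2 * g1 κ := by
  have hκ0 : (0:ℝ) < κ := lt_of_lt_of_le one_pos hκ
  have hne : κ ≠ 0 := ne_of_gt hκ0
  have ht : 0 ≤ κ - 1 := sub_nonneg.2 hκ
  have h10 : (0:ℝ) < κ^10 := by positivity
  rw [g1, sub_nonneg, ← mul_le_mul_iff_of_pos_right h10]
  have e : (4 + 20/κ^2 + 56/κ^3 + 40/κ^4 + 8/κ^5 + 20/κ^6 + 12/κ^7 + 1/κ^8 + 2/κ^9
      + 1/κ^10) * κ^10
      = 4*κ^10 + 20*κ^8 + 56*κ^7 + 40*κ^6 + 8*κ^5 + 20*κ^4 + 12*κ^3 + κ^2 + 2*κ + 1 := by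
    field_simp
  rw [mul_assoc, e]
  nlinarith [pow_nonneg ht 2, pow_nonneg ht 3, pow_nonneg ht 4, pow_nonneg ht 5,
    pow_nonneg ht 6, pow_nonneg ht 7, pow_nonneg ht 8, pow_nonneg ht 9,
    pow_nonneg ht 10, pow_nonneg ht 11]
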